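/- arXiv:1601.04189 — 5 statements merged into one kernel-verified Lean document; each statement's English description precedes it below -/
import Mathlib

section
/- The relation 'connected by an open exponential arc' is an equivalence relation on the set of strictly positive probability densities: it is reflexive, symmetric, and transitive. (For transitivity one may use Hölder's inequality.) -/
open MeasureTheory Set
open scoped ENNReal

/-- A strictly positive probability density with respect to `μ`. -/
def IsPosDensity {X : Type*} [MeasurableSpace X] (μ : Measure X) (p : X → ℝ) : Prop :=
  Measurable p ∧ (∀ᵐ x ∂μ, 0 < p x) ∧ ∫ x, p x ∂μ = 1

/-- `p` and `q` are connected by an open exponential arc. -/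
def ConnByOpenExpArc {X : Type*} [MeasurableSpace X] (μ : Measure X) (p q : X → ℝ) : Prop :=
  ∃ ε > (0:ℝ), ∀ t ∈ Ioo (-ε) (1 + ε),
    Integrable (fun x => p x ^ (1 - t) * q x ^ t) μ

section Aux

variable {X : Type*} [MeasurableSpace X] {μ : Measure X} {p q r : X → ℝ}

private lemma aux_lintegral_one (hp : IsPosDensity μ p) :
    ∫⁻ x, ENNReal.ofReal (p x) ∂μ = 1 := by
  have hi : Integrable p μ := integrable_of_integral_eq_one hp.2.2
  rw [← ofReal_integral_eq_lintegral_ofReal hi (hp.2.1.mono fun x hx => hx.le), hp.2.2,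
    ENNReal.ofReal_one]

private lemma aux_integrable_iff (hp : Measurable p) (hq : Measurable q)
    (hpp : ∀ᵐ x ∂μ, 0 < p x) (hqp : ∀ᵐ x ∂μ, 0 < q x) (t : ℝ) :
    Integrable (fun x => p x ^ (1 - t) * q x ^ t) μ ↔
      ∫⁻ x, ENNReal.ofReal (p x) ^ (1 - t) * ENNReal.ofReal (q x) ^ t ∂μ < ⊤ := by
  have hmeas : Measurable fun x => p x ^ (1 - t) * q x ^ t :=
    (hp.pow_const _).mul (hq.pow_const _)
  have hnn : 0 ≤ᵐ[μ] fun x => p x ^ (1 - t) * q x ^ t := by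
    filter_upwards [hpp, hqp] with x h1 h2
    positivity
  have hcong : ∫⁻ x, ENNReal.ofReal (p x ^ (1 - t) * q x ^ t) ∂μ
      = ∫⁻ x, ENNReal.ofReal (p x) ^ (1 - t) * ENNReal.ofReal (q x) ^ t ∂μ := by
    apply lintegral_congr_ae
    filter_upwards [hpp, hqp] with x h1 h2
    rw [ENNReal.ofReal_mul (Real.rpow_nonneg h1.le _), ENNReal.ofReal_rpow_of_pos h1,
      ENNReal.ofReal_rpow_of_pos h2]
  constructor
  · intro h
    rw [← hcong]
    exact (hasFiniteIntegral_iff_ofReal hnn).mp h.2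
  · intro h
    exact ⟨hmeas.aestronglyMeasurable, (hasFiniteIntegral_iff_ofReal hnn).mpr (by rwa [hcong])⟩

private lemma aux_holder_pointwise {a b c : ℝ≥0∞} (ha0 : a ≠ 0) (ha : a ≠ ⊤)
    (hb0 : b ≠ 0) (hb : b ≠ ⊤) (hc0 : c ≠ 0) (hc : c ≠ ⊤) {t s u β : ℝ}
    (e1 : (1 - s) * (1 - β) = 1 - t) (e2 : s * (1 - β) = t - β)
    (e3 : (1 - u) * β = β - t) (e4 : u * β = t) :
    a ^ (1 - t) * c ^ t = (a ^ (1 - s) * b ^ s) ^ (1 - β) * (b ^ (1 - u) * c ^ u) ^ β := by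
  have hA : a ^ (1 - s) ≠ 0 := (ENNReal.rpow_pos (pos_iff_ne_zero.mpr ha0) ha).ne'
  have hB : b ^ s ≠ 0 := (ENNReal.rpow_pos (pos_iff_ne_zero.mpr hb0) hb).ne'
  have hB' : b ^ (1 - u) ≠ 0 := (ENNReal.rpow_pos (pos_iff_ne_zero.mpr hb0) hb).ne'
  have hC : c ^ u ≠ 0 := (ENNReal.rpow_pos (pos_iff_ne_zero.mpr hc0) hc).ne'
  have hbb : b ^ (t - β) * b ^ (β - t) = 1 := by
    rw [← ENNReal.rpow_add _ _ hb0 hb]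
    norm_num
  calc a ^ (1 - t) * c ^ t
      = (a ^ (1 - t) * c ^ t) * (b ^ (t - β) * b ^ (β - t)) := by rw [hbb, mul_one]
    _ = (a ^ (1 - t) * b ^ (t - β)) * (b ^ (β - t) * c ^ t) := by ring
    _ = (a ^ ((1 - s) * (1 - β)) * b ^ (s * (1 - β))) *
          (b ^ ((1 - u) * β) * c ^ (u * β)) := by rw [e1, e2, e3, e4]
    _ = (a ^ (1 - s) * b ^ s) ^ (1 - β) * (b ^ (1 - u) * c ^ u) ^ β := by
        rw [ENNReal.mul_rpow_of_ne_zero hA hB, ENNReal.mul_rpow_of_ne_zero hB' hC,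
          ← ENNReal.rpow_mul, ← ENNReal.rpow_mul, ← ENNReal.rpow_mul, ← ENNReal.rpow_mul]

/-- The negative tail of the exponential arc, via Hölder's inequality. -/
private lemma aux_tail (hp : Measurable p) (hq : Measurable q) (hr : Measurable r)
    (hpp : ∀ᵐ x ∂μ, 0 < p x) (hqp : ∀ᵐ x ∂μ, 0 < q x) (hrp : ∀ᵐ x ∂μ, 0 < r x)
    {ε₁ ε₂ : ℝ} (hε₁ : 0 < ε₁) (hε₂ : 0 < ε₂)
    (h1 : ∀ s ∈ Ioo (-ε₁) (1 + ε₁),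
      ∫⁻ x, ENNReal.ofReal (p x) ^ (1 - s) * ENNReal.ofReal (q x) ^ s ∂μ < ⊤)
    (h2 : ∀ u ∈ Ioo (-ε₂) (1 + ε₂),
      ∫⁻ x, ENNReal.ofReal (q x) ^ (1 - u) * ENNReal.ofReal (r x) ^ u ∂μ < ⊤) :
    ∃ ε > (0:ℝ), ∀ t ∈ Ioo (-ε) (0:ℝ),
      ∫⁻ x, ENNReal.ofReal (p x) ^ (1 - t) * ENNReal.ofReal (r x) ^ t ∂μ < ⊤ := by
  set β : ℝ := min ε₁ 1 / 4 with hβdef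
  have hβ0 : 0 < β := by
    have := lt_min hε₁ one_pos
    positivity
  have hβε₁ : β ≤ ε₁ / 4 := by
    have := min_le_left ε₁ 1
    simp only [hβdef]
    linarith
  have hβ1 : β ≤ 1 / 4 := by
    have := min_le_right ε₁ 1
    simp only [hβdef]
    linarith
  have hden : 0 < 1 - β := by linarith
  refine ⟨min ε₁ (β * ε₂) / 2, by positivity, fun t ht => ?_⟩
  obtain ⟨ht1, ht2⟩ := ht
  have hεε₁ : min ε₁ (β * ε₂) / 2 ≤ ε₁ / 2 := by
    have := min_le_left ε₁ (β * ε₂); linarith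
  have hεε₂ : min ε₁ (β * ε₂) / 2 ≤ β * ε₂ / 2 := by
    have := min_le_right ε₁ (β * ε₂); linarith
  set s : ℝ := (t - β) / (1 - β) with hs_def
  set u : ℝ := t / β with hu_def
  have hs : s ∈ Ioo (-ε₁) (1 + ε₁) := by
    constructor
    · rw [hs_def, lt_div_iff₀ hden]
      nlinarith
    · rw [hs_def, div_lt_iff₀ hden]
      nlinarith
  have hu : u ∈ Ioo (-ε₂) (1 + ε₂) := by
    constructor
    · rw [hu_def, lt_div_iff₀ hβ0]
      nlinarith
    · rw [hu_def, div_lt_iff₀ hβ0]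
      nlinarith
  have e1 : (1 - s) * (1 - β) = 1 - t := by
    rw [hs_def]; field_simp; ring
  have e2 : s * (1 - β) = t - β := by
    rw [hs_def]; field_simp
  have e3 : (1 - u) * β = β - t := by
    rw [hu_def]; field_simp
  have e4 : u * β = t := by
    rw [hu_def]; field_simp
  have hae : ∫⁻ x, ENNReal.ofReal (p x) ^ (1 - t) * ENNReal.ofReal (r x) ^ t ∂μ
      = ∫⁻ x, (ENNReal.ofReal (p x) ^ (1 - s) * ENNReal.ofReal (q x) ^ s) ^ (1 - β) *
          (ENNReal.ofReal (q x) ^ (1 - u) * ENNReal.ofReal (r x) ^ u) ^ β ∂μ := by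
    apply lintegral_congr_ae
    filter_upwards [hpp, hqp, hrp] with x hx1 hx2 hx3
    exact aux_holder_pointwise (ENNReal.ofReal_pos.mpr hx1).ne' ENNReal.ofReal_ne_top
      (ENNReal.ofReal_pos.mpr hx2).ne' ENNReal.ofReal_ne_top
      (ENNReal.ofReal_pos.mpr hx3).ne' ENNReal.ofReal_ne_top e1 e2 e3 e4
  rw [hae]
  have hmeas1 : AEMeasurable (fun x => ENNReal.ofReal (p x) ^ (1 - s) *
      ENNReal.ofReal (q x) ^ s) μ :=
    ((hp.ennreal_ofReal.pow_const _).mul (hq.ennreal_ofReal.pow_const _)).aemeasurable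
  have hmeas2 : AEMeasurable (fun x => ENNReal.ofReal (q x) ^ (1 - u) *
      ENNReal.ofReal (r x) ^ u) μ :=
    ((hq.ennreal_ofReal.pow_const _).mul (hr.ennreal_ofReal.pow_const _)).aemeasurable
  have key := ENNReal.lintegral_mul_norm_pow_le hmeas1 hmeas2 hden.le hβ0.le (by ring)
  refine lt_of_le_of_lt key (ENNReal.mul_lt_top ?_ ?_)
  · exact ENNReal.rpow_lt_top_of_nonneg hden.le (h1 s hs).ne
  · exact ENNReal.rpow_lt_top_of_nonneg hβ0.le (h2 u hu).ne

private lemma aux_mid (hp : Measurable p) (hr : Measurable r)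
    (hP1 : ∫⁻ x, ENNReal.ofReal (p x) ∂μ = 1) (hR1 : ∫⁻ x, ENNReal.ofReal (r x) ∂μ = 1)
    {t : ℝ} (h0 : 0 ≤ t) (h1 : t ≤ 1) :
    ∫⁻ x, ENNReal.ofReal (p x) ^ (1 - t) * ENNReal.ofReal (r x) ^ t ∂μ < ⊤ := by
  have key := ENNReal.lintegral_mul_norm_pow_le (μ := μ)
    hp.ennreal_ofReal.aemeasurable hr.ennreal_ofReal.aemeasurable
    (by linarith : (0:ℝ) ≤ 1 - t) h0 (by ring)
  refine lt_of_le_of_lt key ?_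
  rw [hP1, hR1, ENNReal.one_rpow, ENNReal.one_rpow, mul_one]
  exact ENNReal.one_lt_top

end Aux

/-- connection by open exponential arcs is an equivalence relation on the
set of strictly positive probability densities. -/
theorem connByOpenExpArc_equivalence
    {X : Type*} [MeasurableSpace X] (μ : Measure X) [SigmaFinite μ] :
    (∀ p : X → ℝ, IsPosDensity μ p → ConnByOpenExpArc μ p p) ∧
    (∀ p q : X → ℝ, IsPosDensity μ p → IsPosDensity μ q →
      ConnByOpenExpArc μ p q → ConnByOpenExpArc μ q p) ∧
    (∀ p q r : X → ℝ, IsPosDensity μ p → IsPosDensity μ q → IsPosDensity μ r →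
      ConnByOpenExpArc μ p q → ConnByOpenExpArc μ q r → ConnByOpenExpArc μ p r) := by
  have hrefl : ∀ p : X → ℝ, IsPosDensity μ p → ConnByOpenExpArc μ p p := by
    intro p hp
    refine ⟨1, one_pos, fun t _ => ?_⟩
    have hi : Integrable p μ := integrable_of_integral_eq_one hp.2.2
    apply hi.congr
    filter_upwards [hp.2.1] with x hx
    rw [← Real.rpow_add hx]
    norm_num
  have hsymm : ∀ p q : X → ℝ, IsPosDensity μ p → IsPosDensity μ q →
      ConnByOpenExpArc μ p q → ConnByOpenExpArc μ q p := by
    rintro p q _ _ ⟨ε, hε, h⟩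
    refine ⟨ε, hε, fun t ht => ?_⟩
    obtain ⟨ht1, ht2⟩ := ht
    have ht' : 1 - t ∈ Ioo (-ε) (1 + ε) := ⟨by linarith, by linarith⟩
    apply (h (1 - t) ht').congr
    filter_upwards with x
    rw [show (1 : ℝ) - (1 - t) = t by ring]
    exact mul_comm _ _
  refine ⟨hrefl, hsymm, ?_⟩
  intro p q r hp hq hr hpq hqr
  obtain ⟨ε₁, hε₁, h1⟩ := hpq
  obtain ⟨ε₂, hε₂, h2⟩ := hqr
  obtain ⟨ε₃, hε₃, h3⟩ := hsymm q r hq hr ⟨ε₂, hε₂, h2⟩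
  obtain ⟨ε₄, hε₄, h4⟩ := hsymm p q hp hq ⟨ε₁, hε₁, h1⟩
  have h1' := fun s hs => (aux_integrable_iff hp.1 hq.1 hp.2.1 hq.2.1 s).mp (h1 s hs)
  have h2' := fun u hu => (aux_integrable_iff hq.1 hr.1 hq.2.1 hr.2.1 u).mp (h2 u hu)
  have h3' := fun s hs => (aux_integrable_iff hr.1 hq.1 hr.2.1 hq.2.1 s).mp (h3 s hs)
  have h4' := fun u hu => (aux_integrable_iff hq.1 hp.1 hq.2.1 hp.2.1 u).mp (h4 u hu)
  obtain ⟨δ₁, hδ₁, htail1⟩ :=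
    aux_tail hp.1 hq.1 hr.1 hp.2.1 hq.2.1 hr.2.1 hε₁ hε₂ h1' h2'
  obtain ⟨δ₂, hδ₂, htail2⟩ :=
    aux_tail hr.1 hq.1 hp.1 hr.2.1 hq.2.1 hp.2.1 hε₃ hε₄ h3' h4'
  refine ⟨min δ₁ δ₂, lt_min hδ₁ hδ₂, fun t ht => ?_⟩
  obtain ⟨ht1, ht2⟩ := ht
  rw [aux_integrable_iff hp.1 hr.1 hp.2.1 hr.2.1 t]
  rcases lt_or_ge t 0 with h | h
  · exact htail1 t ⟨lt_of_le_of_lt (neg_le_neg (min_le_left δ₁ δ₂)) ht1, h⟩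
  · rcases le_or_gt t 1 with h' | h'
    · exact aux_mid hp.1 hr.1 (aux_lintegral_one hp) (aux_lintegral_one hr) h h'
    · have hswap : ∫⁻ x, ENNReal.ofReal (p x) ^ (1 - t) * ENNReal.ofReal (r x) ^ t ∂μ
          = ∫⁻ x, ENNReal.ofReal (r x) ^ (1 - (1 - t)) * ENNReal.ofReal (p x) ^ (1 - t) ∂μ := by
        apply lintegral_congr fun x => ?_
        rw [show (1 : ℝ) - (1 - t) = t by ring]
        exact mul_comm _ _
      rw [hswap]
      refine htail2 (1 - t) ⟨?_, by linarith⟩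
      have : min δ₁ δ₂ ≤ δ₂ := min_le_right δ₁ δ₂
      linarith
end

section
/- Let p, q be strictly positive probability densities on a measure space. If there exists ε > 0 such that ∫ (q/p)^{1+ε} p dμ < ∞ and ∫ (p/q)^{1+ε} q dμ < ∞, then p and q are connected by an open exponential arc, i.e., ∫ p^{1-t} q^t dμ < ∞ for all t in an open interval containing [0,1]. -/
open MeasureTheory Set

private lemma rpow_le_one_add_rpow {a t s : ℝ} (ha : 0 < a) (ht : 0 ≤ t) (hts : t ≤ s) :
    a ^ t ≤ 1 + a ^ s := by
  rcases le_total a 1 with h | h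
  · calc a ^ t ≤ 1 := Real.rpow_le_one ha.le h ht
    _ ≤ 1 + a ^ s := le_add_of_nonneg_right (Real.rpow_nonneg ha.le s)
  · calc a ^ t ≤ a ^ s := Real.rpow_le_rpow_of_exponent_le h hts
    _ ≤ 1 + a ^ s := le_add_of_nonneg_left one_pos.le

private lemma key_identity {p q t : ℝ} (hp : 0 < p) (hq : 0 < q) :
    p ^ (1 - t) * q ^ t = (q / p) ^ t * p := by
  rw [Real.div_rpow hq.le hp.le, Real.rpow_sub hp, Real.rpow_one]
  field_simp

/-- the `L^{1+ε}` condition on the two likelihood ratios implies connection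
by an open exponential arc. -/
theorem Lp_condition_implies_open_exponential_arc
    {X : Type*} [MeasurableSpace X] (μ : Measure X) [SigmaFinite μ]
    (p q : X → ℝ)
    (hpm : Measurable p) (hqm : Measurable q)
    (hppos : ∀ᵐ x ∂μ, 0 < p x) (hqpos : ∀ᵐ x ∂μ, 0 < q x)
    (hp1 : ∫ x, p x ∂μ = 1) (hq1 : ∫ x, q x ∂μ = 1)
    (h : ∃ ε > (0:ℝ),
      Integrable (fun x => (q x / p x) ^ (1 + ε) * p x) μ ∧
      Integrable (fun x => (p x / q x) ^ (1 + ε) * q x) μ) :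
    ∃ δ > (0:ℝ), ∀ t ∈ Ioo (-δ) (1 + δ),
      Integrable (fun x => p x ^ (1 - t) * q x ^ t) μ := by
  obtain ⟨ε, hε, hqp_int, hpq_int⟩ := h
  have hp_intg : Integrable p μ := by
    by_contra hc
    rw [integral_undef hc] at hp1; norm_num at hp1
  have hq_intg : Integrable q μ := by
    by_contra hc
    rw [integral_undef hc] at hq1; norm_num at hq1
  refine ⟨ε, hε, fun t ht => ?_⟩
  have hbound : Integrable (fun x =>
      (p x + (q x / p x) ^ (1 + ε) * p x) + (q x + (p x / q x) ^ (1 + ε) * q x)) μ :=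
    (hp_intg.add hqp_int).add (hq_intg.add hpq_int)
  refine Integrable.mono' hbound ?_ ?_
  · exact ((hpm.pow measurable_const).mul (hqm.pow measurable_const)).aestronglyMeasurable
  · filter_upwards [hppos, hqpos] with x hpx hqx
    have hnn : 0 ≤ p x ^ (1 - t) * q x ^ t :=
      mul_nonneg (Real.rpow_nonneg hpx.le _) (Real.rpow_nonneg hqx.le _)
    rw [Real.norm_eq_abs, abs_of_nonneg hnn]
    rcases le_or_gt 0 t with htn | htn
    · have h1 : p x ^ (1 - t) * q x ^ t = (q x / p x) ^ t * p x := key_identity hpx hqx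
      have h2 : (q x / p x) ^ t ≤ 1 + (q x / p x) ^ (1 + ε) :=
        rpow_le_one_add_rpow (div_pos hqx hpx) htn ht.2.le
      calc p x ^ (1 - t) * q x ^ t = (q x / p x) ^ t * p x := h1
        _ ≤ (1 + (q x / p x) ^ (1 + ε)) * p x := by
            exact mul_le_mul_of_nonneg_right h2 hpx.le
        _ = p x + (q x / p x) ^ (1 + ε) * p x := by ring
        _ ≤ _ := le_add_of_nonneg_right (add_nonneg hqx.le
            (mul_nonneg (Real.rpow_nonneg (div_nonneg hpx.le hqx.le) _) hqx.le))
    · have h1 : p x ^ (1 - t) * q x ^ t = (p x / q x) ^ (1 - t) * q x := by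
        have := key_identity hqx hpx (t := 1 - t)
        rw [sub_sub_cancel] at this
        linarith [this]
      have h2 : (p x / q x) ^ (1 - t) ≤ 1 + (p x / q x) ^ (1 + ε) := by
        apply rpow_le_one_add_rpow (div_pos hpx hqx) (by linarith) (by linarith [ht.1])
      calc p x ^ (1 - t) * q x ^ t = (p x / q x) ^ (1 - t) * q x := h1
        _ ≤ (1 + (p x / q x) ^ (1 + ε)) * q x := mul_le_mul_of_nonneg_right h2 hqx.le
        _ = q x + (p x / q x) ^ (1 + ε) * q x := by ring
        _ ≤ _ := le_add_of_nonneg_left (add_nonneg hpx.le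
            (mul_nonneg (Real.rpow_nonneg (div_nonneg hqx.le hpx.le) _) hpx.le))
end

section
/- Let p, q₁, q₂ be strictly positive probability densities with q₁, q₂ satisfying: there exists ε > 0 with ∫ (qᵢ/p)^{1+ε} p dμ < ∞ and ∫ (p/qᵢ)^{1+ε} qᵢ dμ < ∞ for i = 1,2. Then every convex combination q_θ = (1-θ)q₁ + θq₂, 0 < θ < 1, satisfies the same pair of conditions (with the same ε): ∫ (q_θ/p)^{1+ε} p dμ < ∞ and ∫ (p/q_θ)^{1+ε} q_θ dμ < ∞. In particular the maximal exponential family is closed under convex combinations. -/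
open MeasureTheory Set

lemma conv_rpow_neg {ε θ a b : ℝ} (hε : 0 < ε) (ha : 0 < a) (hb : 0 < b)
    (h0 : 0 < θ) (h1 : θ < 1) :
    ((1 - θ) * a + θ * b) ^ (-ε) ≤ (1 - θ) * a ^ (-ε) + θ * b ^ (-ε) := by
  have h1θ : (0:ℝ) ≤ 1 - θ := by linarith
  have hc : 0 < (1 - θ) * a + θ * b := by positivity
  have hlog : (1 - θ) * Real.log a + θ * Real.log b ≤ Real.log ((1 - θ) * a + θ * b) := by
    have := strictConcaveOn_log_Ioi.concaveOn.2 (mem_Ioi.2 ha) (mem_Ioi.2 hb)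
      h1θ h0.le (by ring)
    simpa [smul_eq_mul] using this
  have hexp : Real.exp ((1 - θ) * (Real.log a * (-ε)) + θ * (Real.log b * (-ε))) ≤
      (1 - θ) * Real.exp (Real.log a * (-ε)) + θ * Real.exp (Real.log b * (-ε)) := by
    have := convexOn_exp.2 (mem_univ (Real.log a * (-ε))) (mem_univ (Real.log b * (-ε)))
      h1θ h0.le (by ring)
    simpa [smul_eq_mul] using this
  rw [Real.rpow_def_of_pos hc, Real.rpow_def_of_pos ha, Real.rpow_def_of_pos hb]
  calc Real.exp (Real.log ((1 - θ) * a + θ * b) * (-ε))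
      ≤ Real.exp ((1 - θ) * (Real.log a * (-ε)) + θ * (Real.log b * (-ε))) := by
        apply Real.exp_le_exp.2; nlinarith
    _ ≤ _ := hexp

/-- the `L^{1+ε}` characterization of membership in the maximal exponential
family at `p` is stable under convex combinations. -/
theorem maximal_exponential_family_convex
    {X : Type*} [MeasurableSpace X] (μ : Measure X) [SigmaFinite μ]
    (p q₁ q₂ : X → ℝ)
    (hpm : Measurable p) (hq1m : Measurable q₁) (hq2m : Measurable q₂)
    (hppos : ∀ᵐ x ∂μ, 0 < p x) (hq1pos : ∀ᵐ x ∂μ, 0 < q₁ x) (hq2pos : ∀ᵐ x ∂μ, 0 < q₂ x)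
    (hp1 : ∫ x, p x ∂μ = 1) (hq11 : ∫ x, q₁ x ∂μ = 1) (hq21 : ∫ x, q₂ x ∂μ = 1)
    (ε : ℝ) (hε : 0 < ε)
    (h1a : Integrable (fun x => (q₁ x / p x) ^ (1 + ε) * p x) μ)
    (h1b : Integrable (fun x => (p x / q₁ x) ^ (1 + ε) * q₁ x) μ)
    (h2a : Integrable (fun x => (q₂ x / p x) ^ (1 + ε) * p x) μ)
    (h2b : Integrable (fun x => (p x / q₂ x) ^ (1 + ε) * q₂ x) μ)
    (θ : ℝ) (hθ : θ ∈ Ioo (0:ℝ) 1) :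
    Integrable
        (fun x => (((1 - θ) * q₁ x + θ * q₂ x) / p x) ^ (1 + ε) * p x) μ ∧
    Integrable
        (fun x => (p x / ((1 - θ) * q₁ x + θ * q₂ x)) ^ (1 + ε) *
          ((1 - θ) * q₁ x + θ * q₂ x)) μ := by
  obtain ⟨hθ0, hθ1⟩ := hθ
  have h1θ : 0 ≤ 1 - θ := by linarith
  have hqθm : Measurable fun x => (1 - θ) * q₁ x + θ * q₂ x :=
    (hq1m.const_mul _).add (hq2m.const_mul _)
  constructor
  · apply Integrable.mono'
      ((h1a.const_mul (1 - θ)).add (h2a.const_mul θ))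
    · have hd : Measurable fun x => ((1 - θ) * q₁ x + θ * q₂ x) / p x := hqθm.div hpm
      have hr : Measurable fun x => (((1 - θ) * q₁ x + θ * q₂ x) / p x) ^ (1 + ε) := by
        measurability
      exact (hr.mul hpm).aestronglyMeasurable
    · filter_upwards [hppos, hq1pos, hq2pos] with x hp hq1 hq2
      have ha : (0:ℝ) ≤ q₁ x / p x := by positivity
      have hb : (0:ℝ) ≤ q₂ x / p x := by positivity
      have key := (convexOn_rpow (by linarith : (1:ℝ) ≤ 1 + ε)).2
        (mem_Ici.2 ha) (mem_Ici.2 hb) h1θ hθ0.le (by ring)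
      simp only [smul_eq_mul] at key
      have heq : ((1 - θ) * q₁ x + θ * q₂ x) / p x
          = (1 - θ) * (q₁ x / p x) + θ * (q₂ x / p x) := by
        field_simp
      rw [Real.norm_eq_abs, abs_of_nonneg (by positivity)]
      rw [heq]
      calc ((1 - θ) * (q₁ x / p x) + θ * (q₂ x / p x)) ^ (1 + ε) * p x
          ≤ ((1 - θ) * (q₁ x / p x) ^ (1 + ε) + θ * (q₂ x / p x) ^ (1 + ε)) * p x :=
            mul_le_mul_of_nonneg_right key hp.le
        _ = (1 - θ) * ((q₁ x / p x) ^ (1 + ε) * p x) + θ * ((q₂ x / p x) ^ (1 + ε) * p x) := by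
            ring
  · apply Integrable.mono'
      ((h1b.const_mul (1 - θ)).add (h2b.const_mul θ))
    · have hd : Measurable fun x => p x / ((1 - θ) * q₁ x + θ * q₂ x) := hpm.div hqθm
      have hr : Measurable fun x => (p x / ((1 - θ) * q₁ x + θ * q₂ x)) ^ (1 + ε) := by
        measurability
      exact (hr.mul hqθm).aestronglyMeasurable
    · filter_upwards [hppos, hq1pos, hq2pos] with x hp hq1 hq2
      simp only [Pi.add_apply]
      have hqθ : 0 < (1 - θ) * q₁ x + θ * q₂ x := by positivity
      have hrw : ∀ c : ℝ, 0 < c → (p x / c) ^ (1 + ε) * c = p x ^ (1 + ε) * c ^ (-ε) := by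
        intro c hc
        rw [Real.div_rpow hp.le hc.le, div_mul_eq_mul_div, mul_div_assoc]
        congr 1
        rw [show -ε = 1 - (1 + ε) by ring, Real.rpow_sub hc, Real.rpow_one]
      rw [Real.norm_eq_abs, abs_of_nonneg (by positivity), hrw _ hqθ, hrw _ hq1, hrw _ hq2]
      have key := conv_rpow_neg hε hq1 hq2 hθ0 hθ1
      calc p x ^ (1 + ε) * ((1 - θ) * q₁ x + θ * q₂ x) ^ (-ε)
          ≤ p x ^ (1 + ε) * ((1 - θ) * q₁ x ^ (-ε) + θ * q₂ x ^ (-ε)) :=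
            mul_le_mul_of_nonneg_left key (by positivity)
        _ = (1 - θ) * (p x ^ (1 + ε) * q₁ x ^ (-ε)) + θ * (p x ^ (1 + ε) * q₂ x ^ (-ε)) := by
            ring
end

section
/- Let EF(c) be an exponential family with densities p̄ = exp(uᵀ(c − E_p[c]) − K_p) · p relative to a member p, and let q be a density with E_q[c] = E_p[c] and finite entropy. Then KL(q‖p) ≤ KL(q‖p̄) for every p̄ ∈ EF(c); i.e., p is the reverse information projection of q onto EF(c). Moreover KL(q‖p̄) − KL(q‖p) = K_p(U¹) ≥ 0 where p̄ = e^{U¹ − K_p(U¹)}·p, with equality iff U¹ = 0 (q-a.e. constant). -/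
open MeasureTheory Real

/-- reverse information projection. If `E_q[c] = E_p[c]` then
`KL(q‖p) ≤ KL(q‖p̄)` for every member `p̄ = e^{U¹ − K_p(U¹)}·p` of the exponential
family with sufficient statistics `c`; the gap is `K_p(U¹) ≥ 0`, vanishing iff
`U¹ = 0` a.e. -/
theorem reverse_information_projection
    {X : Type*} [MeasurableSpace X] (μ : Measure X) [SigmaFinite μ]
    (p q : X → ℝ) (n : ℕ) (c : Fin n → X → ℝ) (u : Fin n → ℝ)
    (hpm : Measurable p) (hqm : Measurable q) (hcm : ∀ j, Measurable (c j))
    (hppos : ∀ᵐ x ∂μ, 0 < p x) (hqpos : ∀ᵐ x ∂μ, 0 < q x)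
    (hp1 : ∫ x, p x ∂μ = 1) (hq1 : ∫ x, q x ∂μ = 1)
    (hcp : ∀ j, Integrable (fun x => c j x * p x) μ)
    (hcq : ∀ j, Integrable (fun x => c j x * q x) μ)
    (hmatch : ∀ j, ∫ x, c j x * q x ∂μ = ∫ x, c j x * p x ∂μ)
    (U : X → ℝ)
    (hU : U = fun x => ∑ j, u j * (c j x - ∫ y, c j y * p y ∂μ))
    (hexp : Integrable (fun x => Real.exp (U x) * p x) μ)
    (K : ℝ) (hK : K = Real.log (∫ x, Real.exp (U x) * p x ∂μ))
    (pbar : X → ℝ) (hpbar : pbar = fun x => Real.exp (U x - K) * p x)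
    (hUq : Integrable (fun x => U x * q x) μ)
    (h1 : Integrable (fun x => q x * Real.log (q x / p x)) μ)
    (h2 : Integrable (fun x => q x * Real.log (q x / pbar x)) μ) :
    (∫ x, q x * Real.log (q x / pbar x) ∂μ) -
        (∫ x, q x * Real.log (q x / p x) ∂μ) = K ∧
    0 ≤ K ∧
    (∫ x, q x * Real.log (q x / p x) ∂μ) ≤
      ∫ x, q x * Real.log (q x / pbar x) ∂μ ∧
    ((∫ x, q x * Real.log (q x / pbar x) ∂μ) =
        (∫ x, q x * Real.log (q x / p x) ∂μ) ↔ ∀ᵐ x ∂μ, U x = 0) := by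
  have hpInt : Integrable p μ := by
    by_contra h; rw [integral_undef h] at hp1; norm_num at hp1
  have hqInt : Integrable q μ := by
    by_contra h; rw [integral_undef h] at hq1; norm_num at hq1
  set m : Fin n → ℝ := fun j => ∫ y, c j y * p y ∂μ with hm
  -- rewrite U * f as a finite sum
  have hUf : ∀ f : X → ℝ, (fun x => U x * f x)
      = fun x => ∑ j, (u j * (c j x * f x) - (u j * m j) * f x) := by
    intro f; funext x; rw [hU, Finset.sum_mul]
    exact Finset.sum_congr rfl fun j _ => by ring
  have htermp : ∀ j : Fin n, Integrable (fun x => u j * (c j x * p x) - (u j * m j) * p x) μ :=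
    fun j => ((hcp j).const_mul _).sub (hpInt.const_mul _)
  have htermq : ∀ j : Fin n, Integrable (fun x => u j * (c j x * q x) - (u j * m j) * q x) μ :=
    fun j => ((hcq j).const_mul _).sub (hqInt.const_mul _)
  have hUpInt : Integrable (fun x => U x * p x) μ := by
    rw [hUf p]; exact integrable_finset_sum _ fun j _ => htermp j
  have hUp0 : ∫ x, U x * p x ∂μ = 0 := by
    rw [hUf p, integral_finset_sum _ fun j _ => htermp j]
    refine Finset.sum_eq_zero fun j _ => ?_
    rw [integral_sub ((hcp j).const_mul _) (hpInt.const_mul _),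
      integral_const_mul, integral_const_mul, hp1]
    ring
  have hUq0 : ∫ x, U x * q x ∂μ = 0 := by
    rw [hUf q, integral_finset_sum _ fun j _ => htermq j]
    refine Finset.sum_eq_zero fun j _ => ?_
    rw [integral_sub ((hcq j).const_mul _) (hqInt.const_mul _),
      integral_const_mul, integral_const_mul, hq1, hmatch j]
    ring
  -- ∫ exp(U) p ≥ 1
  have hI1 : (1 : ℝ) ≤ ∫ x, Real.exp (U x) * p x ∂μ := by
    have hle : (fun x => p x + U x * p x) ≤ᵐ[μ] fun x => Real.exp (U x) * p x := by
      filter_upwards [hppos] with x hx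
      nlinarith [Real.add_one_le_exp (U x), hx.le]
    calc (1 : ℝ) = ∫ x, (p x + U x * p x) ∂μ := by
          rw [integral_add hpInt hUpInt, hp1, hUp0]; ring
      _ ≤ _ := integral_mono_ae (hpInt.add hUpInt) hexp hle
  have hK0 : 0 ≤ K := by
    rw [hK]; exact Real.log_nonneg hI1
  -- key pointwise identity
  have hae : (fun x => q x * Real.log (q x / pbar x)) =ᵐ[μ]
      fun x => q x * Real.log (q x / p x) - U x * q x + K * q x := by
    filter_upwards [hppos, hqpos] with x hp hq
    rw [hpbar]
    have hpe : Real.exp (U x - K) * p x ≠ 0 := by positivity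
    rw [Real.log_div hq.ne' hpe, Real.log_mul (Real.exp_ne_zero _) hp.ne',
      Real.log_exp, Real.log_div hq.ne' hp.ne']
    ring
  have hint1 : Integrable (fun x => q x * Real.log (q x / p x) - U x * q x) μ := h1.sub hUq
  have hdiff : (∫ x, q x * Real.log (q x / pbar x) ∂μ) -
      (∫ x, q x * Real.log (q x / p x) ∂μ) = K := by
    rw [integral_congr_ae hae, integral_add hint1 (hqInt.const_mul K),
      integral_sub h1 hUq, integral_const_mul, hq1, hUq0]
    ring
  refine ⟨hdiff, hK0, by linarith, ?_⟩
  constructor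
  · intro heq
    have hKz : K = 0 := by linarith [hdiff, heq]
    have hIeq : ∫ x, Real.exp (U x) * p x ∂μ = 1 := by
      rw [hKz] at hK
      rcases Real.log_eq_zero.mp hK.symm with h | h | h <;> linarith
    have hsub1 : Integrable (fun x => Real.exp (U x) * p x - p x) μ := hexp.sub hpInt
    have hint : Integrable (fun x => Real.exp (U x) * p x - p x - U x * p x) μ :=
      hsub1.sub hUpInt
    have hzero : ∫ x, (Real.exp (U x) * p x - p x - U x * p x) ∂μ = 0 := by
      rw [integral_sub hsub1 hUpInt, integral_sub hexp hpInt, hIeq, hp1, hUp0]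
      ring
    have hnn : 0 ≤ᵐ[μ] fun x => Real.exp (U x) * p x - p x - U x * p x := by
      filter_upwards [hppos] with x hx
      simp only [Pi.zero_apply]
      nlinarith [Real.add_one_le_exp (U x), hx.le]
    have haez : (fun x => Real.exp (U x) * p x - p x - U x * p x) =ᵐ[μ] 0 :=
      (integral_eq_zero_iff_of_nonneg_ae hnn hint).mp hzero
    filter_upwards [haez, hppos] with x hz hx
    have hz' : (Real.exp (U x) - 1 - U x) * p x = 0 := by
      have : Real.exp (U x) * p x - p x - U x * p x = 0 := hz
      linarith [this]
    have hfac : Real.exp (U x) - 1 - U x = 0 := by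
      rcases mul_eq_zero.mp hz' with h | h
      · exact h
      · exact absurd h hx.ne'
    by_contra hne
    have := Real.add_one_lt_exp hne
    linarith
  · intro hU0
    have hIeq : ∫ x, Real.exp (U x) * p x ∂μ = 1 := by
      have : (fun x => Real.exp (U x) * p x) =ᵐ[μ] p := by
        filter_upwards [hU0] with x hx; simp [hx]
      rw [integral_congr_ae this, hp1]
    have hKz : K = 0 := by rw [hK, hIeq, Real.log_one]
    linarith [hdiff]
end

section
/- Let p ∈ ℰ and V_p a subspace of centered p-integrable random variables. If q lies both in the exponential family EF(V_p) = {e^{U − K_p(U)} p : U ∈ V_p} and in the mixture family MF(V_p) = {q : E_q[U] = 0 for all U ∈ V_p}, then q = p. (Proof: write q = e^{U − K_p(U)} p with U ∈ V_p; then KL(q‖p) = E_q[U] − K_p(U) = −K_p(U) ≤ 0, forcing K_p(U) = 0 and hence U = 0.) -/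
open MeasureTheory Real

/-- the unique intersection of the exponential family `EF(V_p)` and the
mixture family `MF(V_p)` is `p` itself. -/
theorem exponential_mixture_intersection
    {X : Type*} [MeasurableSpace X] (μ : Measure X) [SigmaFinite μ]
    (p q : X → ℝ)
    (hpm : Measurable p) (hqm : Measurable q)
    (hppos : ∀ᵐ x ∂μ, 0 < p x) (hqpos : ∀ᵐ x ∂μ, 0 < q x)
    (hp1 : ∫ x, p x ∂μ = 1) (hq1 : ∫ x, q x ∂μ = 1)
    (V : Submodule ℝ (X → ℝ))
    (hVp : ∀ W ∈ V, Integrable (fun x => W x * p x) μ ∧ ∫ x, W x * p x ∂μ = 0)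
    (U : X → ℝ) (hUV : U ∈ V)
    (hexp : Integrable (fun x => Real.exp (U x) * p x) μ)
    (K : ℝ) (hK : K = Real.log (∫ x, Real.exp (U x) * p x ∂μ))
    (hq : q = fun x => Real.exp (U x - K) * p x)
    (hmix : ∀ W ∈ V, Integrable (fun x => W x * q x) μ ∧ ∫ x, W x * q x ∂μ = 0) :
    ∀ᵐ x ∂μ, q x = p x := by
  have hIp : Integrable p μ := by
    by_contra h
    rw [integral_undef h] at hp1; norm_num at hp1
  have hIq : Integrable q μ := by
    by_contra h
    rw [integral_undef h] at hq1; norm_num at hq1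
  obtain ⟨hIUp, hUp0⟩ := hVp U hUV
  obtain ⟨hIUq, hUq0⟩ := hmix U hUV
  -- ∫ e^U p = e^K
  have hq1' : ∫ x, Real.exp (U x - K) * p x ∂μ = 1 := by rw [hq] at hq1; exact hq1
  have hZ : ∫ x, Real.exp (U x) * p x ∂μ = Real.exp K := by
    have heq : (fun x => Real.exp (U x - K) * p x)
        = fun x => Real.exp (-K) * (Real.exp (U x) * p x) := by
      funext x
      rw [Real.exp_sub, Real.exp_neg]
      ring
    rw [heq, integral_const_mul] at hq1'
    have h2 : Real.exp K * (Real.exp (-K) * ∫ x, Real.exp (U x) * p x ∂μ)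
        = Real.exp K * 1 := by rw [hq1']
    rwa [← mul_assoc, ← Real.exp_add, add_neg_cancel, Real.exp_zero, one_mul, mul_one] at h2
  -- f = (e^U - 1 - U) p ≥ 0 a.e.
  set f : X → ℝ := fun x => Real.exp (U x) * p x - p x - U x * p x with hfdef
  have hIf : Integrable f μ := (hexp.sub hIp).sub hIUp
  have hfnn : 0 ≤ᵐ[μ] f := by
    filter_upwards [hppos] with x hx
    have h1 := Real.add_one_le_exp (U x)
    simp only [hfdef, Pi.zero_apply]
    nlinarith
  have hIntf : ∫ x, f x ∂μ = Real.exp K - 1 := by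
    simp only [hfdef]
    have hI1 : Integrable (fun x => Real.exp (U x) * p x - p x) μ := hexp.sub hIp
    rw [integral_sub hI1 hIUp, integral_sub hexp hIp, hZ, hp1, hUp0]
    ring
  -- K ≥ 0
  have hKnn : 0 ≤ K := by
    have h0 : 0 ≤ ∫ x, f x ∂μ := integral_nonneg_of_ae hfnn
    rw [hIntf] at h0
    have : Real.exp 0 ≤ Real.exp K := by rw [Real.exp_zero]; linarith
    exact Real.exp_le_exp.mp this
  -- K ≤ 0 : use g = (p - q) + (U q - K q) ≥ 0 a.e., with ∫ g = -K
  have hKnp : K ≤ 0 := by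
    set g : X → ℝ := fun x => (p x - q x) + (U x * q x - K * q x) with hgdef
    have hIg : Integrable g μ := (hIp.sub hIq).add (hIUq.sub (hIq.const_mul K))
    have hgnn : 0 ≤ᵐ[μ] g := by
      filter_upwards [hppos] with x hx
      have hqx : q x = Real.exp (U x - K) * p x := by rw [hq]
      set t := U x - K with ht
      have hmul : Real.exp (-t) * Real.exp t = 1 := by
        rw [← Real.exp_add]; simp
      have h1 := Real.add_one_le_exp (-t)
      have h2 := Real.exp_pos t
      simp only [hgdef, Pi.zero_apply, hqx]
      have hUt : U x * (Real.exp t * p x) - K * (Real.exp t * p x)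
          = t * (Real.exp t * p x) := by rw [ht]; ring
      rw [hUt]
      have h3 : (-t + 1) * Real.exp t ≤ 1 := by
        nlinarith [mul_le_mul_of_nonneg_right h1 h2.le]
      nlinarith [mul_le_mul_of_nonneg_right h3 hx.le]
    have h0 : 0 ≤ ∫ x, g x ∂μ := integral_nonneg_of_ae hgnn
    have hIntg : ∫ x, g x ∂μ = -K := by
      simp only [hgdef]
      have hI1 : Integrable (fun x => p x - q x) μ := hIp.sub hIq
      have hI2 : Integrable (fun x => K * q x) μ := hIq.const_mul K
      have hI3 : Integrable (fun x => U x * q x - K * q x) μ := hIUq.sub hI2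
      rw [integral_add hI1 hI3, integral_sub hIp hIq, integral_sub hIUq hI2,
        integral_const_mul, hp1, hq1, hUq0]
      ring
    rw [hIntg] at h0
    linarith
  have hK0 : K = 0 := le_antisymm hKnp hKnn
  -- equality case: f = 0 a.e.
  have hIntf0 : ∫ x, f x ∂μ = 0 := by rw [hIntf, hK0, Real.exp_zero]; ring
  have hf0 : f =ᵐ[μ] 0 := (integral_eq_zero_iff_of_nonneg_ae hfnn hIf).mp hIntf0
  filter_upwards [hf0, hppos] with x h0 hx
  simp only [hfdef, Pi.zero_apply] at h0
  have hU0 : U x = 0 := by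
    by_contra hne
    have := Real.add_one_lt_exp hne
    nlinarith
  rw [hq]
  simp [hU0, hK0]
end
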